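/- Fix a natural number n and define, for complex s with Re(s) > 0, h_{n+1}(s) = (−1)^{n+1} s^{−(2n+2)} ∫_0^∞ [t/(e^{2πt} − 1)] ∫_0^{t²} y^{n+1}/(y + s²) dy dt. Then the double integral converges absolutely for every s with Re(s) > 0, h_{n+1} is holomorphic on the half-plane Re(s) > 0, and for every natural number j there exist constants C > 0 and σ_0 > 0 such that |h_{n+1}^{(j)}(s)| ≤ C |s|^{−(2n+2+j)} for all s with Re(s) ≥ σ_0. -/

import Mathlib

open Complex Real MeasureTheory Set Metric



/-- The remainder term `h_{n+1}(s)` in the asymptotic expansion of `log G(s+1)`: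
`h_{n+1}(s) = (−1)^{n+1} s^{−(2n+2)} ∫_0^∞ t/(e^{2πt} − 1) ∫_0^{t²} y^{n+1}/(y + s²) dy dt`. -/
noncomputable def hRem (n : ℕ) (s : ℂ) : ℂ :=
  (-1) ^ (n + 1) * s ^ (-(2 * (n : ℤ) + 2)) *
    ∫ t in Set.Ioi (0 : ℝ),
      ((t / (Real.exp (2 * Real.pi * t) - 1) : ℝ) : ℂ) *
        ∫ y in Set.Ioc (0 : ℝ) (t ^ 2), (y : ℂ) ^ (n + 1) / ((y : ℂ) + s ^ 2)



noncomputable def hg (t : ℝ) : ℝ := t / (Real.exp (2 * Real.pi * t) - 1)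

def hS : Set (ℝ × ℝ) := {p : ℝ × ℝ | 0 < p.1 ∧ 0 < p.2 ∧ p.2 ≤ p.1 ^ 2}

lemma hS_meas : MeasurableSet hS := by
  have h1 : MeasurableSet {p : ℝ × ℝ | 0 < p.1} := measurableSet_lt measurable_const measurable_fst
  have h2 : MeasurableSet {p : ℝ × ℝ | 0 < p.2} := measurableSet_lt measurable_const measurable_snd
  have h3 : MeasurableSet {p : ℝ × ℝ | p.2 ≤ p.1 ^ 2} :=
    measurableSet_le measurable_snd (measurable_fst.pow_const 2)
  exact (h1.inter (h2.inter h3))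

lemma hg_nonneg {t : ℝ} (ht : 0 < t) : 0 ≤ hg t := by
  apply div_nonneg ht.le
  have : (1:ℝ) < Real.exp (2 * Real.pi * t) := by
    have : (0:ℝ) < 2 * Real.pi * t := by positivity
    simpa using Real.exp_lt_exp.2 this
  linarith

lemma hg_den_ge {t : ℝ} (ht : 0 < t) : t * Real.exp t ≤ Real.exp (2 * Real.pi * t) - 1 := by
  have h1 : Real.exp (2 * t) ≤ Real.exp (2 * Real.pi * t) := by
    apply Real.exp_le_exp.2; nlinarith [Real.pi_gt_three]
  have h2 : (Real.exp t - 1) * (Real.exp t + 1) = Real.exp (2*t) - 1 := by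
    rw [two_mul, Real.exp_add]; ring
  have h3 : t + 1 ≤ Real.exp t := Real.add_one_le_exp t
  nlinarith [Real.exp_pos t]

lemma hg_le {t : ℝ} (ht : 0 < t) : hg t ≤ Real.exp (-t) := by
  have hden : 0 < t * Real.exp t := by positivity
  have : hg t ≤ t / (t * Real.exp t) := by
    apply div_le_div_of_nonneg_left ht.le hden (hg_den_ge ht)
  calc hg t ≤ t / (t * Real.exp t) := this
    _ = Real.exp (-t) := by rw [Real.exp_neg]; field_simp

lemma denom_lb1 {s : ℂ} (hs : 0 < s.re) {y : ℝ} (hy : 0 ≤ y) :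
    3 / 4 * s.re ^ 2 ≤ ‖(y : ℂ) + s ^ 2‖ := by
  set σ := s.re
  set τ := s.im
  have hre : ((y : ℂ) + s ^ 2).re = y + (σ ^ 2 - τ ^ 2) := by
    simp [pow_two, Complex.mul_re, Complex.add_re]; rfl
  have him : ((y : ℂ) + s ^ 2).im = 2 * σ * τ := by
    simp [pow_two, Complex.mul_im, Complex.add_im]; ring
  rcases le_or_gt (|τ|) (σ / 2) with h | h
  · have h1 : |((y : ℂ) + s ^ 2).re| ≤ ‖(y : ℂ) + s ^ 2‖ := Complex.abs_re_le_norm _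
    have h2 : τ ^ 2 ≤ σ ^ 2 / 4 := by
      have := abs_nonneg τ
      nlinarith [_root_.sq_abs τ]
    rw [hre] at h1
    have : y + (σ ^ 2 - τ ^ 2) ≤ |y + (σ ^ 2 - τ ^ 2)| := le_abs_self _
    nlinarith
  · have h1 : |((y : ℂ) + s ^ 2).im| ≤ ‖(y : ℂ) + s ^ 2‖ := Complex.abs_im_le_norm _
    rw [him, abs_mul, abs_mul] at h1
    have : |(2:ℝ)| = 2 := by norm_num
    rw [this, abs_of_pos hs] at h1
    nlinarith

lemma denom_lb2 {s : ℂ} {y : ℝ} (hy : 0 ≤ y) (hy2 : y ≤ ‖s‖ ^ 2 / 4) :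
    3 / 4 * ‖s‖ ^ 2 ≤ ‖(y : ℂ) + s ^ 2‖ := by
  have h1 : ‖s ^ 2‖ ≤ ‖(y : ℂ) + s ^ 2‖ + ‖(y : ℂ)‖ := by
    calc ‖s ^ 2‖ = ‖(y : ℂ) + s ^ 2 - (y:ℂ)‖ := by ring_nf
      _ ≤ ‖(y : ℂ) + s ^ 2‖ + ‖(y : ℂ)‖ := norm_sub_le _ _
  rw [norm_pow] at h1
  have h2 : ‖(y:ℂ)‖ = y := by rw [Complex.norm_real, Real.norm_of_nonneg hy]
  rw [h2] at h1
  linarith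



lemma hg_meas : Measurable hg := by unfold hg; fun_prop

lemma exp_poly_int (r : ℕ) : IntegrableOn (fun t : ℝ => Real.exp (-t) * t ^ r) (Ioi 0) := by
  have h := Real.GammaIntegral_convergent (s := (r:ℝ) + 1) (by positivity)
  apply h.congr_fun ?_ measurableSet_Ioi
  intro x hx
  simp only [add_sub_cancel_right]
  rw [Real.rpow_natCast]

lemma hD (n q : ℕ) :
    IntegrableOn (fun p : ℝ × ℝ => hg p.1 * p.2 ^ (n + 1) * p.1 ^ q) hS := by
  refine (integrable_indicator_iff hS_meas).1 ?_
  set f : ℝ × ℝ → ℝ := hS.indicator (fun p => hg p.1 * p.2 ^ (n + 1) * p.1 ^ q) with hf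
  show Integrable f ((volume : Measure ℝ).prod volume)
  have hfmeas : Measurable f := by
    apply Measurable.indicator ?_ hS_meas
    exact ((hg_meas.comp measurable_fst).mul ((measurable_snd.pow_const _))).mul
      (measurable_fst.pow_const _)
  have hsec : ∀ t : ℝ, 0 < t → (fun y => f (t, y)) =
      (Ioc (0:ℝ) (t^2)).indicator (fun y => hg t * y ^ (n+1) * t ^ q) := by
    intro t ht; funext y
    simp only [hf]
    have hiff : ((t, y) ∈ hS) ↔ y ∈ Ioc (0:ℝ) (t^2) := by simp [hS, Set.mem_Ioc, ht]
    by_cases hy : y ∈ Ioc (0:ℝ) (t^2)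
    · rw [Set.indicator_of_mem (hiff.2 hy), Set.indicator_of_mem hy]
    · rw [Set.indicator_of_notMem (fun h => hy (hiff.1 h)), Set.indicator_of_notMem hy]
  have hsec0 : ∀ t : ℝ, t ≤ 0 → (fun y => f (t, y)) = fun _ => (0:ℝ) := by
    intro t ht; funext y
    apply Set.indicator_of_notMem
    intro h
    exact absurd h.1 (not_lt.2 ht)
  refine (integrable_prod_iff hfmeas.aestronglyMeasurable).2 ⟨?_, ?_⟩
  · refine ae_of_all _ fun t => ?_
    rcases le_or_gt t 0 with ht | ht
    · rw [hsec0 t ht]; exact integrable_zero _ _ _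
    · rw [hsec t ht, integrable_indicator_iff measurableSet_Ioc]
      exact Continuous.integrableOn_Ioc (by fun_prop)
  · apply Integrable.mono'
      (g := (Ioi (0:ℝ)).indicator (fun t => Real.exp (-t) * t ^ (q + 2*n + 4)))
    · rw [integrable_indicator_iff measurableSet_Ioi]; exact exp_poly_int (q + 2*n + 4)
    · exact hfmeas.norm.aestronglyMeasurable.integral_prod_right'
    · refine ae_of_all _ fun t => ?_
      rw [Real.norm_of_nonneg (integral_nonneg fun y => norm_nonneg _)]
      rcases le_or_gt t 0 with ht | ht
      · have h0 : ∀ a : ℝ, f (t, a) = 0 := fun a => congrFun (hsec0 t ht) a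
        simp only [h0, norm_zero, integral_zero]
        exact Set.indicator_nonneg (fun x hx => by have : (0:ℝ) < x := hx; positivity) t
      · have h1 : ∀ a : ℝ, f (t, a) =
            (Ioc (0:ℝ) (t^2)).indicator (fun y => hg t * y ^ (n+1) * t ^ q) a :=
          fun a => congrFun (hsec t ht) a
        simp only [h1]
        have hnn : ∀ y ∈ Ioc (0:ℝ) (t^2), 0 ≤ hg t * y ^ (n+1) * t ^ q := by
          intro y hy
          have := hg_nonneg ht
          have := hy.1
          positivity
        have hnorm : ∀ y, ‖(Ioc (0:ℝ) (t^2)).indicator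
            (fun y => hg t * y ^ (n+1) * t ^ q) y‖ =
            (Ioc (0:ℝ) (t^2)).indicator (fun y => hg t * y ^ (n+1) * t ^ q) y := by
          intro y
          rw [norm_indicator_eq_indicator_norm]
          by_cases hy : y ∈ Ioc (0:ℝ) (t^2)
          · rw [Set.indicator_of_mem hy, Set.indicator_of_mem hy,
              Real.norm_of_nonneg (hnn y hy)]
          · rw [Set.indicator_of_notMem hy, Set.indicator_of_notMem hy]
        simp only [hnorm]
        rw [integral_indicator measurableSet_Ioc,
          Set.indicator_of_mem (Set.mem_Ioi.2 ht)]
        have hint1 : IntegrableOn (fun y : ℝ => hg t * y ^ (n+1) * t ^ q) (Ioc 0 (t^2)) :=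
          Continuous.integrableOn_Ioc (by fun_prop)
        have hint2 : IntegrableOn (fun _ : ℝ => hg t * (t^2) ^ (n+1) * t ^ q) (Ioc 0 (t^2)) :=
          integrableOn_const measure_Ioc_lt_top.ne
        have hmono : ∫ y in Ioc (0:ℝ) (t^2), hg t * y ^ (n+1) * t ^ q ≤
            ∫ _ in Ioc (0:ℝ) (t^2), hg t * (t^2) ^ (n+1) * t ^ q := by
          apply setIntegral_mono_on hint1 hint2 measurableSet_Ioc
          intro y hy
          have h1 : y ^ (n+1) ≤ (t^2) ^ (n+1) := by
            apply pow_le_pow_left₀ hy.1.le hy.2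
          exact mul_le_mul_of_nonneg_right
            (mul_le_mul_of_nonneg_left h1 (hg_nonneg ht)) (by positivity)
        have hconst : ∫ _ in Ioc (0:ℝ) (t^2), hg t * (t^2) ^ (n+1) * t ^ q =
            t^2 * (hg t * (t^2) ^ (n+1) * t ^ q) := by
          rw [setIntegral_const, measureReal_def, Real.volume_Ioc, smul_eq_mul]
          congr 1
          rw [ENNReal.toReal_ofReal (by nlinarith [sq_nonneg t])]
          ring
        have hle : t^2 * (hg t * (t^2) ^ (n+1) * t ^ q) ≤ Real.exp (-t) * t ^ (q + 2*n + 4) := by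
          have h1 : hg t ≤ Real.exp (-t) := hg_le ht
          have h2 : t^2 * (hg t * (t^2) ^ (n+1) * t ^ q) = hg t * t ^ (q + 2*n + 4) := by
            rw [← pow_mul]
            ring_nf
          rw [h2]
          have : (0:ℝ) ≤ t ^ (q + 2*n+4) := by positivity
          exact mul_le_mul_of_nonneg_right h1 this
        linarith



lemma hD0 (n : ℕ) : IntegrableOn (fun p : ℝ × ℝ => hg p.1 * p.2 ^ (n + 1)) hS := by
  simpa using hD n 0

noncomputable def hF (n k : ℕ) (s : ℂ) : ℂ :=
  ∫ p in hS, ((hg p.1 : ℝ) : ℂ) * ((p.2 : ℂ) ^ (n + 1) / ((p.2 : ℂ) + s ^ 2) ^ (k + 1))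

lemma hInd_meas (n k : ℕ) (s : ℂ) :
    Measurable (fun p : ℝ × ℝ =>
      ((hg p.1 : ℝ) : ℂ) * ((p.2 : ℂ) ^ (n + 1) / ((p.2 : ℂ) + s ^ 2) ^ (k + 1))) := by
  apply Measurable.mul
  · exact Complex.measurable_ofReal.comp (hg_meas.comp measurable_fst)
  · apply Measurable.div
    · exact (Complex.measurable_ofReal.comp measurable_snd).pow_const _
    · exact ((Complex.measurable_ofReal.comp measurable_snd).add_const _).pow_const _

lemma norm_integrand_le {n k : ℕ} {s : ℂ} (hs : 0 < s.re) {p : ℝ × ℝ} (hp : p ∈ hS) :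
    ‖((hg p.1 : ℝ) : ℂ) * ((p.2 : ℂ) ^ (n + 1) / ((p.2 : ℂ) + s ^ 2) ^ (k + 1))‖ ≤
      ((3 / 4 * s.re ^ 2) ^ (k + 1))⁻¹ * (hg p.1 * p.2 ^ (n + 1)) := by
  obtain ⟨ht, hy, hyt⟩ := hp
  have hd : 0 < 3 / 4 * s.re ^ 2 := by positivity
  have hdenom : (3 / 4 * s.re ^ 2) ^ (k + 1) ≤ ‖((p.2 : ℂ) + s ^ 2) ^ (k + 1)‖ := by
    rw [norm_pow]
    exact pow_le_pow_left₀ hd.le (denom_lb1 hs hy.le) _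
  have hdpos : (0:ℝ) < (3 / 4 * s.re ^ 2) ^ (k + 1) := by positivity
  rw [norm_mul, norm_div, norm_pow, Complex.norm_real, Real.norm_of_nonneg (hg_nonneg ht),
    Complex.norm_real, Real.norm_of_nonneg hy.le]
  calc hg p.1 * (p.2 ^ (n+1) / ‖((p.2:ℂ) + s^2) ^ (k+1)‖)
      ≤ hg p.1 * (p.2 ^ (n+1) / (3 / 4 * s.re ^ 2) ^ (k + 1)) := by
        apply mul_le_mul_of_nonneg_left ?_ (hg_nonneg ht)
        apply div_le_div_of_nonneg_left (by positivity) hdpos hdenom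
    _ = ((3 / 4 * s.re ^ 2) ^ (k + 1))⁻¹ * (hg p.1 * p.2 ^ (n + 1)) := by
        field_simp

lemma hInt (n k : ℕ) {s : ℂ} (hs : 0 < s.re) :
    IntegrableOn (fun p : ℝ × ℝ =>
      ((hg p.1 : ℝ) : ℂ) * ((p.2 : ℂ) ^ (n + 1) / ((p.2 : ℂ) + s ^ 2) ^ (k + 1))) hS := by
  apply Integrable.mono'
    (g := fun p : ℝ × ℝ => ((3 / 4 * s.re ^ 2) ^ (k + 1))⁻¹ * (hg p.1 * p.2 ^ (n + 1)))
  · exact (hD0 n).const_mul _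
  · exact ((hInd_meas n k s).aestronglyMeasurable).restrict
  · rw [ae_restrict_iff' hS_meas]
    exact ae_of_all _ fun p hp => norm_integrand_le hs hp



-- pointwise bound for `Re s ≥ 1`
lemma norm_integrand_le2 {n k : ℕ} {s : ℂ} (hs : 1 ≤ s.re) {p : ℝ × ℝ} (hp : p ∈ hS) :
    ‖((hg p.1 : ℝ) : ℂ) * ((p.2 : ℂ) ^ (n + 1) / ((p.2 : ℂ) + s ^ 2) ^ (k + 1))‖ ≤
      (4/3) ^ (k+1) * (‖s‖ ^ (2*k+2))⁻¹ *
        (hg p.1 * p.2 ^ (n + 1) * (1 + (2*p.1) ^ (2*k+2))) := by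
  obtain ⟨ht, hy, hyt⟩ := hp
  have hs0 : 0 < s.re := lt_of_lt_of_le one_pos hs
  have hns : 1 ≤ ‖s‖ := le_trans hs (le_trans (le_abs_self _) (Complex.abs_re_le_norm s))
  have hns0 : 0 < ‖s‖ := lt_of_lt_of_le one_pos hns
  have hnorm : ‖((hg p.1 : ℝ) : ℂ) * ((p.2 : ℂ) ^ (n + 1) / ((p.2 : ℂ) + s ^ 2) ^ (k + 1))‖ =
      hg p.1 * (p.2 ^ (n+1) / ‖(p.2:ℂ) + s^2‖ ^ (k+1)) := by
    rw [norm_mul, norm_div, norm_pow, norm_pow, Complex.norm_real,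
      Real.norm_of_nonneg (hg_nonneg ht), Complex.norm_real, Real.norm_of_nonneg hy.le]
  rw [hnorm]
  have hgnn := hg_nonneg ht
  have hynn : (0:ℝ) ≤ p.2 ^ (n+1) := by positivity
  rcases le_or_gt p.1 (‖s‖/2) with hcase | hcase
  · -- small t: use denom_lb2
    have hy2 : p.2 ≤ ‖s‖^2/4 := by nlinarith
    have hlb := denom_lb2 hy.le hy2
    have hd : (0:ℝ) < 3/4 * ‖s‖^2 := by positivity
    have hpow : (3/4 * ‖s‖^2) ^ (k+1) ≤ ‖(p.2:ℂ) + s^2‖ ^ (k+1) :=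
      pow_le_pow_left₀ hd.le hlb _
    have h1 : p.2 ^ (n+1) / ‖(p.2:ℂ) + s^2‖ ^ (k+1) ≤ p.2 ^ (n+1) / (3/4 * ‖s‖^2) ^ (k+1) :=
      div_le_div_of_nonneg_left hynn
        (show (0:ℝ) < (3/4 * ‖s‖^2) ^ (k+1) by positivity) hpow
    have h2 : p.2 ^ (n+1) / (3/4 * ‖s‖^2) ^ (k+1) =
        (4/3)^(k+1) * (‖s‖^(2*k+2))⁻¹ * p.2^(n+1) := by
      have hexp : 2 * (k+1) = 2*k+2 := by ring
      rw [mul_pow, ← pow_mul, hexp]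
      have h34 : ((3:ℝ)/4) ^ (k+1) ≠ 0 := by positivity
      have hsne : ‖s‖ ^ (2*k+2) ≠ 0 := by positivity
      field_simp
      ring_nf; rw [← mul_pow]; norm_num
    calc hg p.1 * (p.2 ^ (n+1) / ‖(p.2:ℂ) + s^2‖ ^ (k+1))
        ≤ hg p.1 * ((4/3)^(k+1) * (‖s‖^(2*k+2))⁻¹ * p.2^(n+1)) := by
          apply mul_le_mul_of_nonneg_left _ hgnn
          rw [← h2]; exact h1
      _ ≤ (4/3) ^ (k+1) * (‖s‖ ^ (2*k+2))⁻¹ *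
            (hg p.1 * p.2 ^ (n + 1) * (1 + (2*p.1) ^ (2*k+2))) := by
          have hinv : (0:ℝ) ≤ (‖s‖^(2*k+2))⁻¹ := by positivity
          have hex : (0:ℝ) ≤ (2*p.1)^(2*k+2) := by positivity
          nlinarith [mul_nonneg hgnn hynn, mul_nonneg (mul_nonneg hgnn hynn) hex,
            mul_nonneg (mul_nonneg (by positivity : (0:ℝ) ≤ (4/3:ℝ)^(k+1)) hinv)
              (mul_nonneg (mul_nonneg hgnn hynn) hex)]
  · -- large t: use denom_lb1 and 2t ≥ ‖s‖
    have hlb := denom_lb1 hs0 hy.le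
    have hlb1 : (3:ℝ)/4 ≤ ‖(p.2:ℂ) + s^2‖ := by nlinarith
    have hpow : ((3:ℝ)/4) ^ (k+1) ≤ ‖(p.2:ℂ) + s^2‖ ^ (k+1) :=
      pow_le_pow_left₀ (by norm_num) hlb1 _
    have h1 : p.2 ^ (n+1) / ‖(p.2:ℂ) + s^2‖ ^ (k+1) ≤ p.2 ^ (n+1) / ((3:ℝ)/4) ^ (k+1) :=
      div_le_div_of_nonneg_left hynn
        (show (0:ℝ) < ((3:ℝ)/4) ^ (k+1) by positivity) hpow
    have h2t : ‖s‖ ^ (2*k+2) ≤ (2*p.1) ^ (2*k+2) :=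
      pow_le_pow_left₀ (norm_nonneg s) (by linarith) _
    have hkey : (‖s‖^(2*k+2))⁻¹ * (2*p.1)^(2*k+2) ≥ 1 := by
      rw [ge_iff_le, ← div_le_iff₀' (by positivity)]
      simpa [div_eq_mul_inv] using h2t
    calc hg p.1 * (p.2 ^ (n+1) / ‖(p.2:ℂ) + s^2‖ ^ (k+1))
        ≤ hg p.1 * (p.2 ^ (n+1) / ((3:ℝ)/4) ^ (k+1)) :=
          mul_le_mul_of_nonneg_left h1 hgnn
      _ = (4/3)^(k+1) * (hg p.1 * p.2 ^ (n+1)) := by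
          rw [div_pow, div_div_eq_mul_div, div_pow]
          field_simp
      _ ≤ (4/3) ^ (k+1) * (‖s‖ ^ (2*k+2))⁻¹ *
            (hg p.1 * p.2 ^ (n + 1) * (1 + (2*p.1) ^ (2*k+2))) := by
          have e1 : (4/3:ℝ) ^ (k+1) * (‖s‖ ^ (2*k+2))⁻¹ *
              (hg p.1 * p.2 ^ (n + 1) * (1 + (2*p.1) ^ (2*k+2))) =
              (4/3:ℝ)^(k+1) * (hg p.1 * p.2^(n+1)) *
                ((‖s‖^(2*k+2))⁻¹ * (1 + (2*p.1)^(2*k+2))) := by ring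
          rw [e1]
          have e2 : (1:ℝ) ≤ (‖s‖^(2*k+2))⁻¹ * (1 + (2*p.1)^(2*k+2)) := by
            have hinv : (0:ℝ) ≤ (‖s‖^(2*k+2))⁻¹ := by positivity
            nlinarith [hkey]
          nlinarith [mul_nonneg (mul_nonneg (by positivity : (0:ℝ) ≤ (4/3:ℝ)^(k+1)) hgnn) hynn,
            e2]

lemma hFbound (n k : ℕ) : ∃ C : ℝ, 0 < C ∧ ∀ s : ℂ, 1 ≤ s.re →
    ‖hF n k s‖ ≤ C * ‖s‖ ^ (-(2*(k:ℤ)+2)) := by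
  set M : ℝ := ∫ p in hS, hg p.1 * p.2 ^ (n + 1) * (1 + (2*p.1) ^ (2*k+2)) with hM
  have hMint : IntegrableOn
      (fun p : ℝ × ℝ => hg p.1 * p.2 ^ (n + 1) * (1 + (2*p.1) ^ (2*k+2))) hS := by
    have h1 : IntegrableOn (fun p : ℝ × ℝ => hg p.1 * p.2 ^ (n+1) +
        (2:ℝ)^(2*k+2) * (hg p.1 * p.2 ^ (n + 1) * p.1 ^ (2*k+2))) hS :=
      (hD0 n).add ((hD n (2*k+2)).const_mul ((2:ℝ)^(2*k+2)))
    apply h1.congr_fun ?_ hS_meas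
    intro p hp
    simp only [mul_pow]
    ring
  have hMnn : 0 ≤ M := by
    apply setIntegral_nonneg hS_meas
    intro p hp
    obtain ⟨ht, hy, _⟩ := hp
    have := hg_nonneg ht
    positivity
  refine ⟨(4/3)^(k+1) * (M + 1), by positivity, fun s hs => ?_⟩
  have hns : 1 ≤ ‖s‖ := le_trans hs (le_trans (le_abs_self _) (Complex.abs_re_le_norm s))
  have hns0 : (0:ℝ) < ‖s‖ := lt_of_lt_of_le one_pos hns
  have hzpow : ‖s‖ ^ (-(2*(k:ℤ)+2)) = (‖s‖ ^ (2*k+2))⁻¹ := by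
    have hc : ((2*k+2 : ℕ) : ℤ) = 2*(k:ℤ)+2 := by push_cast; ring
    rw [← hc, zpow_neg, zpow_natCast]
  have hs0 : 0 < s.re := lt_of_lt_of_le one_pos hs
  calc ‖hF n k s‖ ≤ ∫ p in hS, ‖((hg p.1 : ℝ) : ℂ) *
        ((p.2 : ℂ) ^ (n + 1) / ((p.2 : ℂ) + s ^ 2) ^ (k + 1))‖ :=
        norm_integral_le_integral_norm _
    _ ≤ ∫ p in hS, (4/3) ^ (k+1) * (‖s‖ ^ (2*k+2))⁻¹ *
          (hg p.1 * p.2 ^ (n + 1) * (1 + (2*p.1) ^ (2*k+2))) := by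
        apply setIntegral_mono_on ((hInt n k hs0).norm) (hMint.const_mul _) hS_meas
        intro p hp
        exact norm_integrand_le2 hs hp
    _ = (4/3) ^ (k+1) * (‖s‖ ^ (2*k+2))⁻¹ * M := by
        rw [integral_const_mul]
    _ ≤ (4/3)^(k+1) * (M + 1) * ‖s‖ ^ (-(2*(k:ℤ)+2)) := by
        have he : (4/3:ℝ)^(k+1) * (M + 1) * ‖s‖ ^ (-(2*(k:ℤ)+2)) =
            (4/3)^(k+1) * (‖s‖ ^ (2*k+2))⁻¹ * (M+1) := by rw [hzpow]; ring
        rw [he]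
        exact mul_le_mul_of_nonneg_left (by linarith) (by positivity)



lemma ball_re {s₀ s : ℂ} (hs : 0 < s₀.re) (h : s ∈ ball s₀ (s₀.re / 2)) :
    s₀.re / 2 ≤ s.re := by
  have h1 : |(s - s₀).re| ≤ ‖s - s₀‖ := Complex.abs_re_le_norm _
  rw [mem_ball, dist_eq_norm] at h
  rw [Complex.sub_re] at h1
  have := abs_le.1 h1
  linarith [this.1]

lemma denom_ne_zero {s : ℂ} (hs : 0 < s.re) {y : ℝ} (hy : 0 ≤ y) :
    ((y : ℂ) + s ^ 2) ≠ 0 := by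
  intro h
  have := denom_lb1 hs hy
  rw [h, norm_zero] at this
  nlinarith

lemma hdF (n k : ℕ) {s₀ : ℂ} (hs : 0 < s₀.re) :
    HasDerivAt (hF n k) ((-2) * ((k:ℂ)+1) * s₀ * hF n (k+1) s₀) s₀ := by
  set ε := s₀.re / 2 with hε
  have hεpos : 0 < ε := by simp [hε]; linarith
  set F' : ℂ → ℝ × ℝ → ℂ := fun s p =>
    ((hg p.1 : ℝ) : ℂ) *
      ((p.2 : ℂ) ^ (n + 1) * ((-2) * ((k:ℂ)+1) * s) / ((p.2 : ℂ) + s ^ 2) ^ (k + 2)) with hF'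
  set bound : ℝ × ℝ → ℝ := fun p =>
    2 * ((k:ℝ)+1) * (‖s₀‖ + ε) * ((3/4 * (s₀.re/2)^2) ^ (k+2))⁻¹ * (hg p.1 * p.2 ^ (n+1))
    with hbound
  have key := hasDerivAt_integral_of_dominated_loc_of_deriv_le (μ := volume.restrict hS)
    (F := fun s p => ((hg p.1 : ℝ) : ℂ) * ((p.2 : ℂ) ^ (n + 1) / ((p.2 : ℂ) + s ^ 2) ^ (k + 1)))
    (F' := F') (x₀ := s₀) (bound := bound) (ball_mem_nhds s₀ hεpos)
    (Filter.Eventually.of_forall fun s => (hInd_meas n k s).aestronglyMeasurable.restrict)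
    (hInt n k hs)
    ?meas' ?bnd ?bint ?diff
  case meas' =>
    apply Measurable.aestronglyMeasurable ?_ |>.restrict
    apply Measurable.mul
    · exact Complex.measurable_ofReal.comp (hg_meas.comp measurable_fst)
    · apply Measurable.div
      · exact ((Complex.measurable_ofReal.comp measurable_snd).pow_const _).mul_const _
      · exact ((Complex.measurable_ofReal.comp measurable_snd).add_const _).pow_const _
  case bnd =>
    rw [ae_restrict_iff' hS_meas]
    refine ae_of_all _ fun p hp => ?_
    intro s hsball
    obtain ⟨ht, hy, hyt⟩ := hp
    have hsre : s₀.re/2 ≤ s.re := ball_re hs hsball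
    have hsre0 : 0 < s.re := lt_of_lt_of_le (by linarith) hsre
    have hns : ‖s‖ ≤ ‖s₀‖ + ε := by
      rw [mem_ball, dist_eq_norm] at hsball
      calc ‖s‖ = ‖s₀ + (s - s₀)‖ := by ring_nf
        _ ≤ ‖s₀‖ + ‖s - s₀‖ := norm_add_le _ _
        _ ≤ ‖s₀‖ + ε := by linarith
    have hdlb : 3/4 * (s₀.re/2)^2 ≤ ‖(p.2:ℂ) + s^2‖ := by
      have h1 := denom_lb1 hsre0 hy.le
      have h2 : 3/4 * (s₀.re/2)^2 ≤ 3/4 * s.re^2 := by nlinarith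
      linarith
    have hdpos : (0:ℝ) < 3/4 * (s₀.re/2)^2 := by positivity
    have hnum : ‖(-2 : ℂ) * ((k:ℂ)+1) * s‖ = 2 * ((k:ℝ)+1) * ‖s‖ := by
      have h1 : (-2 : ℂ) * ((k:ℂ)+1) = ((((-2) * ((k:ℝ)+1)) : ℝ) : ℂ) := by push_cast; ring
      rw [h1, norm_mul, Complex.norm_real, Real.norm_eq_abs,
        abs_of_nonpos (by nlinarith [Nat.cast_nonneg (α := ℝ) k])]
      ring
    have hnormF' : ‖F' s p‖ =
        hg p.1 * (p.2 ^ (n+1) * (2 * ((k:ℝ)+1) * ‖s‖) / ‖(p.2:ℂ) + s^2‖ ^ (k+2)) := by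
      simp only [hF']
      rw [norm_mul, norm_div, norm_mul, norm_pow, norm_pow, Complex.norm_real,
        Real.norm_of_nonneg (hg_nonneg ht), Complex.norm_real, Real.norm_of_nonneg hy.le, hnum]
    rw [hnormF', hbound]
    have hgnn := hg_nonneg ht
    have hden : (3/4 * (s₀.re/2)^2) ^ (k+2) ≤ ‖(p.2:ℂ) + s^2‖ ^ (k+2) :=
      pow_le_pow_left₀ hdpos.le hdlb _
    have hdenpos : (0:ℝ) < (3/4 * (s₀.re/2)^2) ^ (k+2) := by positivity
    calc hg p.1 * (p.2 ^ (n+1) * (2 * ((k:ℝ)+1) * ‖s‖) / ‖(p.2:ℂ) + s^2‖ ^ (k+2))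
        ≤ hg p.1 * (p.2 ^ (n+1) * (2 * ((k:ℝ)+1) * (‖s₀‖ + ε)) / (3/4 * (s₀.re/2)^2) ^ (k+2)) := by
          apply mul_le_mul_of_nonneg_left ?_ hgnn
          apply div_le_div₀ (by positivity) ?_ hdenpos hden
          have hynn : (0:ℝ) ≤ p.2 ^ (n+1) := by positivity
          exact mul_le_mul_of_nonneg_left
            (by nlinarith [Nat.cast_nonneg (α := ℝ) k]) hynn
      _ = 2 * ((k:ℝ)+1) * (‖s₀‖ + ε) * ((3/4 * (s₀.re/2)^2) ^ (k+2))⁻¹ *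
            (hg p.1 * p.2 ^ (n+1)) := by field_simp
  case bint => exact (hD0 n).const_mul _
  case diff =>
    rw [ae_restrict_iff' hS_meas]
    refine ae_of_all _ fun p hp => ?_
    intro s hsball
    obtain ⟨ht, hy, hyt⟩ := hp
    have hsre0 : 0 < s.re := lt_of_lt_of_le (by linarith [ball_re hs hsball]) le_rfl
    have hne : ((p.2:ℂ) + s^2) ≠ 0 := denom_ne_zero hsre0 hy.le
    have hw : HasDerivAt (fun s : ℂ => (p.2:ℂ) + s^2) (2*s) s := by
      simpa using (hasDerivAt_pow 2 s).const_add (p.2:ℂ)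
    have hwp : HasDerivAt (fun s : ℂ => ((p.2:ℂ) + s^2)^(k+1))
        ((k+1) * ((p.2:ℂ) + s^2)^k * (2*s)) s := by
      refine (hw.pow (k+1)).congr_deriv ?_; simp
    have hdiv := (hasDerivAt_const s ((p.2:ℂ)^(n+1))).div hwp (pow_ne_zero _ hne)
    have := hdiv.const_mul ((hg p.1 : ℝ) : ℂ)
    refine this.congr_deriv ?_
    simp only [hF']
    field_simp
    ring
  -- now key : Integrable (F' s₀) ∧ HasDerivAt (fun s => ∫ ...) (∫ p, F' s₀ p) s₀
  have heq : (∫ p in hS, F' s₀ p) = (-2) * ((k:ℂ)+1) * s₀ * hF n (k+1) s₀ := by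
    rw [hF]
    rw [← integral_const_mul]
    apply integral_congr_ae
    refine ae_of_all _ fun p => ?_
    simp only [hF']
    have : (k + 1) + 1 = k + 2 := rfl
    rw [this]
    ring
  rw [← heq]
  exact key.2

-- Fubini
lemma hIter (n : ℕ) {s : ℂ} (hs : 0 < s.re) :
    (∫ t in Set.Ioi (0:ℝ), ((t / (Real.exp (2 * Real.pi * t) - 1) : ℝ) : ℂ) *
      ∫ y in Set.Ioc (0:ℝ) (t ^ 2), (y : ℂ) ^ (n + 1) / ((y : ℂ) + s ^ 2)) = hF n 0 s := by
  set f : ℝ × ℝ → ℂ := fun p =>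
    ((hg p.1 : ℝ) : ℂ) * ((p.2 : ℂ) ^ (n + 1) / ((p.2 : ℂ) + s ^ 2) ^ (0 + 1)) with hf
  have hind : Integrable (hS.indicator f) ((volume : Measure ℝ).prod volume) :=
    (integrable_indicator_iff hS_meas).2 (hInt n 0 hs)
  have h1 : hF n 0 s = ∫ p, hS.indicator f p := (integral_indicator hS_meas).symm
  have h2 : (∫ p, hS.indicator f p ∂((volume : Measure ℝ).prod volume)) =
      ∫ t, ∫ y, hS.indicator f (t, y) := integral_prod _ hind
  have hsec : ∀ t : ℝ, (∫ y, hS.indicator f (t, y)) =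
      (Set.Ioi (0:ℝ)).indicator (fun t => ∫ y in Set.Ioc (0:ℝ) (t^2), f (t, y)) t := by
    intro t
    rcases le_or_gt t 0 with ht | ht
    · have hz : ∀ y : ℝ, hS.indicator f (t, y) = 0 := by
        intro y
        apply Set.indicator_of_notMem
        intro hmem
        exact absurd hmem.1 (not_lt.2 ht)
      simp only [hz, integral_zero]
      rw [Set.indicator_of_notMem (by simpa using ht)]
    · have hz : ∀ y : ℝ, hS.indicator f (t, y) =
          (Set.Ioc (0:ℝ) (t^2)).indicator (fun y => f (t, y)) y := by
        intro y
        have hiff : ((t, y) ∈ hS) ↔ y ∈ Set.Ioc (0:ℝ) (t^2) := by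
          simp [hS, Set.mem_Ioc, ht]
        by_cases hy : y ∈ Set.Ioc (0:ℝ) (t^2)
        · rw [Set.indicator_of_mem (hiff.2 hy), Set.indicator_of_mem hy]
        · rw [Set.indicator_of_notMem (fun h => hy (hiff.1 h)), Set.indicator_of_notMem hy]
      simp only [hz]
      rw [integral_indicator measurableSet_Ioc, Set.indicator_of_mem (Set.mem_Ioi.2 ht)]
  calc (∫ t in Set.Ioi (0:ℝ), ((t / (Real.exp (2 * Real.pi * t) - 1) : ℝ) : ℂ) *
      ∫ y in Set.Ioc (0:ℝ) (t ^ 2), (y : ℂ) ^ (n + 1) / ((y : ℂ) + s ^ 2))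
      = ∫ t in Set.Ioi (0:ℝ), ∫ y in Set.Ioc (0:ℝ) (t^2), f (t, y) := by
        apply setIntegral_congr_fun measurableSet_Ioi
        intro t ht
        rw [hf]
        simp only [pow_one, hg]
        rw [← integral_const_mul]
        simp
    _ = ∫ t, (Set.Ioi (0:ℝ)).indicator (fun t => ∫ y in Set.Ioc (0:ℝ) (t^2), f (t, y)) t := by
        rw [integral_indicator measurableSet_Ioi]
    _ = ∫ t, ∫ y, hS.indicator f (t, y) := by
        apply integral_congr_ae
        exact ae_of_all _ fun t => (hsec t).symm
    _ = ∫ p, hS.indicator f p ∂((volume : Measure ℝ).prod volume) := h2.symm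
    _ = hF n 0 s := integral_indicator hS_meas

lemma list_norm_sum_le {α : Type*} (L : List α) (f : α → ℂ) :
    ‖(L.map f).sum‖ ≤ (L.map (fun x => ‖f x‖)).sum := by
  induction L with
  | nil => simp
  | cons a l ih =>
    simp only [List.map_cons, List.sum_cons]
    exact (norm_add_le _ _).trans (by linarith)

lemma hasDerivAt_list_sum {α : Type*} (L : List α) (f : α → ℂ → ℂ) (f' : α → ℂ) (s : ℂ)
    (h : ∀ x ∈ L, HasDerivAt (f x) (f' x) s) :
    HasDerivAt (fun z => (L.map (fun x => f x z)).sum) ((L.map f').sum) s := by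
  induction L with
  | nil => simpa using hasDerivAt_const s (0:ℂ)
  | cons a l ih =>
    simp only [List.map_cons, List.sum_cons]
    exact (h a (by simp)).add (ih fun x hx => h x (List.mem_cons_of_mem _ hx))

lemma bind_pair_sum {α β : Type*} (L : List α) (u v : α → β) (t : β → ℂ) :
    ((L.flatMap (fun x => [u x, v x])).map t).sum = (L.map (fun x => t (u x) + t (v x))).sum := by
  induction L with
  | nil => simp
  | cons a l ih =>
    simp [List.sum_append, ih]
    ring

lemma hopen : IsOpen {z : ℂ | 0 < z.re} := isOpen_lt continuous_const Complex.continuous_re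

lemma hRep (n j : ℕ) : ∃ L : List (ℂ × ℤ × ℕ),
    (∀ x ∈ L, x.2.1 ≤ 2*(x.2.2:ℤ) + 2 + (-(2*(n:ℤ) + 2 + j))) ∧
    ∀ s : ℂ, 0 < s.re → iteratedDeriv j (hRem n) s =
      (L.map (fun x => x.1 * s ^ x.2.1 * hF n x.2.2 s)).sum := by
  induction j with
  | zero =>
    refine ⟨[((-1 : ℂ)^(n+1), -(2*(n:ℤ)+2), 0)], ?_, ?_⟩
    · intro x hx
      simp only [List.mem_singleton] at hx
      subst hx
      simp
    · intro s hs
      rw [iteratedDeriv_zero]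
      simp only [List.map_cons, List.map_nil, List.sum_cons, List.sum_nil, add_zero]
      rw [hRem, hIter n hs]
  | succ j ih =>
    obtain ⟨L, hcond, hEq⟩ := ih
    refine ⟨L.flatMap (fun x => [(x.1 * (x.2.1 : ℂ), x.2.1 - 1, x.2.2),
        (x.1 * (-2) * ((x.2.2 : ℕ) + 1 : ℂ), x.2.1 + 1, x.2.2 + 1)]), ?_, ?_⟩
    · intro x hx
      rw [List.mem_flatMap] at hx
      obtain ⟨a, haL, hxa⟩ := hx
      have hca := hcond a haL
      simp only [List.mem_cons, List.mem_singleton, List.not_mem_nil, or_false] at hxa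
      rcases hxa with h | h <;> subst h <;> simp only [] <;> push_cast <;> omega
    · intro s hs
      rw [iteratedDeriv_succ]
      have hev : iteratedDeriv j (hRem n) =ᶠ[nhds s]
          (fun z => (L.map (fun x => x.1 * z ^ x.2.1 * hF n x.2.2 z)).sum) := by
        filter_upwards [hopen.mem_nhds hs] with z hz using hEq z hz
      rw [hev.deriv_eq]
      have hs0 : s ≠ 0 := fun h => by rw [h] at hs; simp at hs
      have hder : ∀ x ∈ L, HasDerivAt (fun z => x.1 * z ^ x.2.1 * hF n x.2.2 z)
          ((x.1 * (x.2.1 : ℂ)) * s ^ (x.2.1 - 1) * hF n x.2.2 s +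
           (x.1 * (-2) * ((x.2.2 : ℕ) + 1 : ℂ)) * s ^ (x.2.1 + 1) * hF n (x.2.2 + 1) s) s := by
        intro x hx
        have h1 : HasDerivAt (fun z : ℂ => x.1 * z ^ x.2.1)
            (x.1 * ((x.2.1 : ℂ) * s ^ (x.2.1 - 1))) s :=
          (hasDerivAt_zpow x.2.1 s (Or.inl hs0)).const_mul x.1
        have h2 := hdF n x.2.2 hs
        have h3 := h1.mul h2
        refine h3.congr_deriv ?_
        rw [zpow_add_one₀ hs0]
        ring
      have hsum := hasDerivAt_list_sum L _ _ s hder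
      rw [hsum.deriv]
      rw [bind_pair_sum L _ _ (fun x : ℂ × ℤ × ℕ => x.1 * s ^ x.2.1 * hF n x.2.2 s)]

lemma list_sum_map_mul_right {α : Type*} (L : List α) (f : α → ℝ) (r : ℝ) :
    (L.map fun x => f x * r).sum = (L.map f).sum * r := by
  induction L with
  | nil => simp
  | cons a l ih => simp [ih, add_mul]

/-- The double integral defining `h_{n+1}` converges absolutely for `Re(s) > 0`, the function
`h_{n+1}` is holomorphic on the half-plane `Re(s) > 0`, and each derivative satisfies
`|h_{n+1}^{(j)}(s)| = O(|s|^{−(2n+2+j)})` as `Re(s) → ∞`. -/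
theorem hRem_holomorphic_decay (n : ℕ) :
    (∀ s : ℂ, 0 < s.re →
      MeasureTheory.IntegrableOn
        (fun p : ℝ × ℝ =>
          ((p.1 / (Real.exp (2 * Real.pi * p.1) - 1) : ℝ) : ℂ) *
            ((p.2 : ℂ) ^ (n + 1) / ((p.2 : ℂ) + s ^ 2)))
        {p : ℝ × ℝ | 0 < p.1 ∧ 0 < p.2 ∧ p.2 ≤ p.1 ^ 2}) ∧
    DifferentiableOn ℂ (hRem n) {s : ℂ | 0 < s.re} ∧
    (∀ j : ℕ, ∃ C : ℝ, 0 < C ∧ ∃ σ₀ : ℝ, 0 < σ₀ ∧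
      ∀ s : ℂ, σ₀ ≤ s.re →
        ‖iteratedDeriv j (hRem n) s‖ ≤ C * ‖s‖ ^ (-(2 * (n : ℤ) + 2 + j))) := by
  refine ⟨?_, ?_, ?_⟩
  · intro s hs
    have h := hInt n 0 hs
    simp only [hg, zero_add, pow_one] at h; exact h
  · intro s hs
    have hs' : 0 < s.re := hs
    have hs0 : s ≠ 0 := fun h => by rw [h] at hs'; simp at hs'
    have hd : DifferentiableAt ℂ
        (fun z : ℂ => (-1:ℂ)^(n+1) * z ^ (-(2*(n:ℤ)+2)) * hF n 0 z) s :=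
      ((differentiableAt_zpow.mpr (Or.inl hs0)).const_mul _).mul (hdF n 0 hs').differentiableAt
    have hev : (fun z : ℂ => (-1:ℂ)^(n+1) * z ^ (-(2*(n:ℤ)+2)) * hF n 0 z) =ᶠ[nhds s]
        hRem n := by
      filter_upwards [hopen.mem_nhds hs'] with z hz
      rw [hRem, hIter n hz]
    exact ((Filter.EventuallyEq.differentiableAt_iff hev).1 hd).differentiableWithinAt
  · intro j
    obtain ⟨L, hcond, hEq⟩ := hRep n j
    choose Cf hCfpos hCf using fun k => hFbound n k
    set C := (L.map (fun x : ℂ × ℤ × ℕ => ‖x.1‖ * Cf x.2.2)).sum + 1 with hC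
    have hsum_nn : 0 ≤ (L.map (fun x : ℂ × ℤ × ℕ => ‖x.1‖ * Cf x.2.2)).sum := by
      apply List.sum_nonneg
      intro a ha
      rw [List.mem_map] at ha
      obtain ⟨x, -, rfl⟩ := ha
      exact mul_nonneg (norm_nonneg _) (hCfpos x.2.2).le
    have hCpos : 0 < C := by rw [hC]; linarith
    refine ⟨C, hCpos, 1, one_pos, fun s hs => ?_⟩
    have hs' : 0 < s.re := lt_of_lt_of_le one_pos hs
    have hns : 1 ≤ ‖s‖ := le_trans hs (le_trans (le_abs_self _) (Complex.abs_re_le_norm s))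
    have hns0 : ‖s‖ ≠ 0 := by positivity
    rw [hEq s hs']
    have hterm : ∀ x ∈ L, ‖x.1 * s ^ x.2.1 * hF n x.2.2 s‖ ≤
        (‖x.1‖ * Cf x.2.2) * ‖s‖ ^ (-(2*(n:ℤ) + 2 + j)) := by
      intro x hx
      rw [norm_mul, norm_mul, norm_zpow]
      calc ‖x.1‖ * ‖s‖ ^ x.2.1 * ‖hF n x.2.2 s‖
          ≤ ‖x.1‖ * ‖s‖ ^ x.2.1 * (Cf x.2.2 * ‖s‖ ^ (-(2*(x.2.2:ℤ)+2))) := by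
            apply mul_le_mul_of_nonneg_left (hCf x.2.2 s hs)
            positivity
        _ = (‖x.1‖ * Cf x.2.2) * ‖s‖ ^ (x.2.1 + (-(2*(x.2.2:ℤ)+2))) := by
            rw [zpow_add₀ hns0]
            ring
        _ ≤ (‖x.1‖ * Cf x.2.2) * ‖s‖ ^ (-(2*(n:ℤ) + 2 + j)) := by
            apply mul_le_mul_of_nonneg_left
              (zpow_le_zpow_right₀ hns (by linarith [hcond x hx]))
            exact mul_nonneg (norm_nonneg _) (hCfpos x.2.2).le
    calc ‖(L.map (fun x => x.1 * s ^ x.2.1 * hF n x.2.2 s)).sum‖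
        ≤ (L.map (fun x => ‖x.1 * s ^ x.2.1 * hF n x.2.2 s‖)).sum :=
          list_norm_sum_le L _
      _ ≤ (L.map (fun x => (‖x.1‖ * Cf x.2.2) * ‖s‖ ^ (-(2*(n:ℤ) + 2 + j)))).sum :=
          List.sum_le_sum hterm
      _ = (L.map (fun x : ℂ × ℤ × ℕ => ‖x.1‖ * Cf x.2.2)).sum *
            ‖s‖ ^ (-(2*(n:ℤ) + 2 + j)) := list_sum_map_mul_right L _ _
      _ ≤ C * ‖s‖ ^ (-(2*(n:ℤ) + 2 + j)) := by
          apply mul_le_mul_of_nonneg_right (by rw [hC]; linarith) (by positivity)
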